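/- Let Δ = Δ_0 + Δ_1 + ⋯ + Δ_k be a Minkowski sum decomposition of a reflexive polytope Δ ⊂ ℝ^d into lattice polytopes and σ̄∨ ⊂ ℝ^d ⊕ ℝ^{k+1} the dual of the Cayley cone. Under the linear isomorphism ℝ^d ⊕ ℝ^{k+1} → ℝ^d ⊕ ℝ^k ⊕ ℝ sending (n, α_0, …, α_k) to (n, α_1, …, α_k, α_0 + ⋯ + α_k), the image of σ̄∨ equals {(t·Conv({u − Σ_{i=1}^k min⟨Δ_i, u⟩ e_i* : u ∈ Δ*} ∪ {e_1*, …, e_k*}), t) : t ≥ 0}, where {e_1*,…,e_k*} is the standard basis of the middle factor ℝ^k. -/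

import Mathlib

open scoped Pointwise
open Set

noncomputable section

/-- The standard pairing on `ℝ^n`. -/
def pairing {n : ℕ} (x y : Fin n → ℝ) : ℝ := ∑ i, x i * y i

/-- A point of `ℝ^n` lying in the lattice `ℤ^n`. -/
def IsLatticePt {n : ℕ} (x : Fin n → ℝ) : Prop := ∀ i, ∃ z : ℤ, x i = (z : ℝ)

/-- A lattice polytope: the convex hull of finitely many lattice points. -/
def IsLatticePolytope {n : ℕ} (P : Set (Fin n → ℝ)) : Prop :=
  ∃ S : Set (Fin n → ℝ), S.Finite ∧ (∀ x ∈ S, IsLatticePt x) ∧ P = convexHull ℝ S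

/-- The dual polytope `P* = {y | ⟨x,y⟩ ≥ -1 ∀ x ∈ P}`. -/
def polarDual {n : ℕ} (P : Set (Fin n → ℝ)) : Set (Fin n → ℝ) :=
  {y | ∀ x ∈ P, -1 ≤ pairing x y}

/-- A reflexive polytope. -/
def IsReflexive {n : ℕ} (P : Set (Fin n → ℝ)) : Prop :=
  IsLatticePolytope P ∧ (0 : Fin n → ℝ) ∈ interior P ∧ IsLatticePolytope (polarDual P)

/-- `min⟨P, u⟩ = min_{x ∈ P} ⟨x, u⟩`. -/
def minPair {n : ℕ} (P : Set (Fin n → ℝ)) (u : Fin n → ℝ) : ℝ :=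
  sInf ((fun x => pairing x u) '' P)

/-- The real vector space `ℝ^d ⊕ ℝ^k`. -/
abbrev Vdk (d k : ℕ) := (Fin d → ℝ) × (Fin k → ℝ)

/-- The pairing on `ℝ^d ⊕ ℝ^k` (sum of the two standard pairings). -/
def pairingV {d k : ℕ} (x y : Vdk d k) : ℝ := pairing x.1 y.1 + pairing x.2 y.2

def IsLatticePtV {d k : ℕ} (x : Vdk d k) : Prop := IsLatticePt x.1 ∧ IsLatticePt x.2

def IsLatticePolytopeV {d k : ℕ} (P : Set (Vdk d k)) : Prop :=
  ∃ S : Set (Vdk d k), S.Finite ∧ (∀ x ∈ S, IsLatticePtV x) ∧ P = convexHull ℝ S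

def polarDualV {d k : ℕ} (P : Set (Vdk d k)) : Set (Vdk d k) :=
  {y | ∀ x ∈ P, -1 ≤ pairingV x y}

def IsReflexiveV {d k : ℕ} (P : Set (Vdk d k)) : Prop :=
  IsLatticePolytopeV P ∧ (0 : Vdk d k) ∈ interior P ∧ IsLatticePolytopeV (polarDualV P)

/-- The Cayley cone `σ̄ = {(t₀Δ₀ + ⋯ + t_kΔ_k, t₀, …, t_k) : tᵢ ≥ 0} ⊆ ℝ^d ⊕ ℝ^{k+1}`. -/
def cayleyCone {d k : ℕ} (Δ : Fin (k+1) → Set (Fin d → ℝ)) : Set (Vdk d (k+1)) :=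
  {p | (∀ i, 0 ≤ p.2 i) ∧ p.1 ∈ ∑ i, p.2 i • Δ i}

/-- The dual cone of a cone in `ℝ^d ⊕ ℝ^k`. -/
def dualConeV {d k : ℕ} (σ : Set (Vdk d k)) : Set (Vdk d k) :=
  {y | ∀ x ∈ σ, 0 ≤ pairingV x y}

/-- The linear isomorphism `ℝ^d ⊕ ℝ^{k+1} → ℝ^d ⊕ ℝ^k ⊕ ℝ`,
`(n, α₀, …, α_k) ↦ (n, α₁, …, α_k, α₀ + ⋯ + α_k)`. -/
def cayleyIso {d k : ℕ} : Vdk d (k+1) → (Fin d → ℝ) × (Fin k → ℝ) × ℝ :=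
  fun p => (p.1, fun i => p.2 i.succ, ∑ i, p.2 i)

section Aux

variable {n : ℕ} {P A B : Set (Fin n → ℝ)} {u v : Fin n → ℝ}

lemma pairing_add_left (x y u : Fin n → ℝ) : pairing (x + y) u = pairing x u + pairing y u := by
  simp [pairing, add_mul, Finset.sum_add_distrib]

lemma pairing_smul_left (c : ℝ) (x u : Fin n → ℝ) : pairing (c • x) u = c * pairing x u := by
  simp [pairing, Finset.mul_sum, mul_assoc]

lemma pairing_zero_left (u : Fin n → ℝ) : pairing 0 u = 0 := by simp [pairing]

lemma pairing_zero_right (x : Fin n → ℝ) : pairing x 0 = 0 := by simp [pairing]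

lemma pairing_add_right (x u v : Fin n → ℝ) :
    pairing x (u + v) = pairing x u + pairing x v := by
  simp [pairing, mul_add, Finset.sum_add_distrib]

lemma pairing_smul_right (c : ℝ) (x u : Fin n → ℝ) :
    pairing x (c • u) = c * pairing x u := by
  simp [pairing, Finset.mul_sum, mul_left_comm]

lemma continuous_pairing_left (u : Fin n → ℝ) :
    Continuous fun x : Fin n → ℝ => pairing x u := by
  unfold pairing
  exact continuous_finset_sum _ fun i _ => (continuous_apply i).mul continuous_const

lemma minPair_exists (hP : IsCompact P) (hne : P.Nonempty) (u : Fin n → ℝ) :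
    ∃ x ∈ P, pairing x u = minPair P u := by
  have h := (hP.image (continuous_pairing_left u)).sInf_mem (hne.image _)
  obtain ⟨x, hx, hxe⟩ := h
  exact ⟨x, hx, hxe⟩

lemma minPair_le (hP : IsCompact P) (hx : v ∈ P) (u : Fin n → ℝ) :
    minPair P u ≤ pairing v u :=
  csInf_le (hP.image (continuous_pairing_left u)).bddBelow ⟨v, hx, rfl⟩

lemma le_minPair (hne : P.Nonempty) {c : ℝ} (h : ∀ x ∈ P, c ≤ pairing x u) :
    c ≤ minPair P u :=
  le_csInf (hne.image _) (by rintro y ⟨x, hx, rfl⟩; exact h x hx)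

lemma minPair_add_set (hA : IsCompact A) (hAne : A.Nonempty)
    (hB : IsCompact B) (hBne : B.Nonempty) (u : Fin n → ℝ) :
    minPair (A + B) u = minPair A u + minPair B u := by
  obtain ⟨a, ha, hae⟩ := minPair_exists hA hAne u
  obtain ⟨b, hb, hbe⟩ := minPair_exists hB hBne u
  refine le_antisymm ?_ ?_
  · calc minPair (A + B) u ≤ pairing (a + b) u :=
          minPair_le (hA.add hB) (Set.add_mem_add ha hb) u
      _ = minPair A u + minPair B u := by rw [pairing_add_left, hae, hbe]
  · refine le_minPair (hAne.add hBne) ?_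
    rintro x hx
    obtain ⟨x1, hx1, x2, hx2, rfl⟩ := Set.mem_add.mp hx
    rw [pairing_add_left]
    exact add_le_add (minPair_le hA hx1 u) (minPair_le hB hx2 u)

lemma minPair_smul_set (hA : IsCompact A) (hAne : A.Nonempty) {c : ℝ} (hc : 0 ≤ c)
    (u : Fin n → ℝ) : minPair (c • A) u = c * minPair A u := by
  obtain ⟨a, ha, hae⟩ := minPair_exists hA hAne u
  refine le_antisymm ?_ ?_
  · calc minPair (c • A) u ≤ pairing (c • a) u :=
          minPair_le (hA.smul c) (smul_mem_smul_set ha) u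
      _ = c * minPair A u := by rw [pairing_smul_left, hae]
  · refine le_minPair (hAne.smul_set) ?_
    rintro x hx
    obtain ⟨y, hy, rfl⟩ := hx
    rw [pairing_smul_left]
    exact mul_le_mul_of_nonneg_left (minPair_le hA hy u) hc

lemma minPair_zero_right (hP : IsCompact P) (hne : P.Nonempty) :
    minPair P (0 : Fin n → ℝ) = 0 := by
  obtain ⟨x, hx, hxe⟩ := minPair_exists hP hne 0
  rw [← hxe, pairing_zero_right]

lemma minPair_smul_right (hP : IsCompact P) (hne : P.Nonempty) {t : ℝ} (ht : 0 ≤ t)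
    (u : Fin n → ℝ) : minPair P (t • u) = t * minPair P u := by
  obtain ⟨x, hx, hxe⟩ := minPair_exists hP hne u
  obtain ⟨y, hy, hye⟩ := minPair_exists hP hne (t • u)
  refine le_antisymm ?_ ?_
  · calc minPair P (t • u) ≤ pairing x (t • u) := minPair_le hP hx _
      _ = t * minPair P u := by rw [pairing_smul_right, hxe]
  · calc t * minPair P u ≤ t * pairing y u :=
          mul_le_mul_of_nonneg_left (minPair_le hP hy u) ht
      _ = minPair P (t • u) := by rw [← pairing_smul_right, hye]

lemma minPair_superadd (hP : IsCompact P) (hne : P.Nonempty) (u v : Fin n → ℝ) :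
    minPair P u + minPair P v ≤ minPair P (u + v) := by
  obtain ⟨x, hx, hxe⟩ := minPair_exists hP hne (u + v)
  rw [← hxe, pairing_add_right]
  exact add_le_add (minPair_le hP hx u) (minPair_le hP hx v)

lemma minPair_combo (hP : IsCompact P) (hne : P.Nonempty) {a b : ℝ}
    (ha : 0 ≤ a) (hb : 0 ≤ b) (u v : Fin n → ℝ) :
    a * minPair P u + b * minPair P v ≤ minPair P (a • u + b • v) := by
  calc a * minPair P u + b * minPair P v
      = minPair P (a • u) + minPair P (b • v) := by
        rw [minPair_smul_right hP hne ha, minPair_smul_right hP hne hb]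
    _ ≤ minPair P (a • u + b • v) := minPair_superadd hP hne _ _

lemma isCompact_nonempty_finsetSum {m : ℕ} (Δ : Fin m → Set (Fin n → ℝ))
    (s : Finset (Fin m)) (hc : ∀ i, IsCompact (Δ i)) (hne : ∀ i, (Δ i).Nonempty) :
    IsCompact (∑ i ∈ s, Δ i) ∧ (∑ i ∈ s, Δ i).Nonempty := by
  classical
  induction s using Finset.induction_on with
  | empty =>
      simp only [Finset.sum_empty]
      rw [show (0 : Set (Fin n → ℝ)) = {0} from rfl]
      exact ⟨isCompact_singleton, ⟨0, rfl⟩⟩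
  | insert _ _ hns ih =>
      rw [Finset.sum_insert hns]
      exact ⟨(hc _).add ih.1, (hne _).add ih.2⟩

lemma minPair_finsetSum {m : ℕ} (Δ : Fin m → Set (Fin n → ℝ))
    (s : Finset (Fin m)) (hc : ∀ i, IsCompact (Δ i)) (hne : ∀ i, (Δ i).Nonempty)
    (u : Fin n → ℝ) :
    minPair (∑ i ∈ s, Δ i) u = ∑ i ∈ s, minPair (Δ i) u := by
  classical
  induction s using Finset.induction_on with
  | empty =>
      simp only [Finset.sum_empty]
      rw [show (0 : Set (Fin n → ℝ)) = {0} from rfl]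
      simp [minPair, pairing]
  | insert _ _ hns ih =>
      rw [Finset.sum_insert hns, Finset.sum_insert hns, ← ih,
        minPair_add_set (hc _) (hne _)
          (isCompact_nonempty_finsetSum Δ _ hc hne).1
          (isCompact_nonempty_finsetSum Δ _ hc hne).2]

lemma minPair_neg_of_interior (hP : IsCompact P) (h0 : (0 : Fin n → ℝ) ∈ interior P)
    (hu : u ≠ 0) : minPair P u < 0 := by
  obtain ⟨ε, hε, hball⟩ := Metric.mem_nhds_iff.mp (mem_interior_iff_mem_nhds.mp h0)
  have hun : ‖u‖ ≠ 0 := norm_ne_zero_iff.mpr hu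
  have hunpos : (0:ℝ) < ‖u‖ := norm_pos_iff.mpr hu
  set c : ℝ := ε / 2 / ‖u‖ with hcdef
  have hcpos : 0 < c := by positivity
  have hx : -(c • u) ∈ P := by
    apply hball
    rw [Metric.mem_ball, dist_zero_right, norm_neg, norm_smul, Real.norm_eq_abs,
      abs_of_pos hcpos, hcdef, div_mul_cancel₀ _ hun.symm.symm]
    linarith
  have huu : 0 < pairing u u := by
    obtain ⟨i, hi⟩ := Function.ne_iff.mp hu
    refine Finset.sum_pos' (fun j _ => mul_self_nonneg _) ⟨i, Finset.mem_univ i, ?_⟩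
    exact mul_self_pos.mpr hi
  calc minPair P u ≤ pairing (-(c • u)) u := minPair_le hP hx u
    _ = -(c * pairing u u) := by
        rw [show -(c • u) = (-c) • u by simp, pairing_smul_left]; ring
    _ < 0 := by nlinarith


end Aux

lemma mem_dualConeV_cayley_iff {d k : ℕ} (Δ : Fin (k+1) → Set (Fin d → ℝ))
    (hc : ∀ i, IsCompact (Δ i)) (hne : ∀ i, (Δ i).Nonempty) (y : Vdk d (k+1)) :
    y ∈ dualConeV (cayleyCone Δ) ↔ ∀ i, 0 ≤ minPair (Δ i) y.1 + y.2 i := by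
  constructor
  · intro h i
    have key : ∀ x ∈ Δ i, -(y.2 i) ≤ pairing x y.1 := by
      intro x hx
      have hmem : ((x, Pi.single i 1) : Vdk d (k+1)) ∈ cayleyCone Δ := by
        refine ⟨fun j => ?_, ?_⟩
        · rcases eq_or_ne j i with rfl | hji
          · simp
          · simp [Pi.single_eq_of_ne hji]
        · rw [Set.mem_fintype_sum]
          refine ⟨fun j => if j = i then x else 0, fun j => ?_, by simp⟩
          rcases eq_or_ne j i with rfl | hji
          · simp only [if_pos rfl]
            exact Set.mem_smul_set.mpr ⟨x, hx, by simp⟩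
          · obtain ⟨p, hp⟩ := hne j
            simp only [if_neg hji]
            exact Set.mem_smul_set.mpr ⟨p, hp, by simp [Pi.single_eq_of_ne hji]⟩
      have h2 : 0 ≤ pairing x y.1 + pairing (Pi.single i 1) y.2 := h _ hmem
      have h3 : pairing (Pi.single i 1) y.2 = y.2 i := by
        simp [pairing, Pi.single_apply, ite_mul, Finset.sum_ite_eq']
      rw [h3] at h2
      linarith
    have := le_minPair (hne i) key
    linarith
  · rintro h ⟨p, τ⟩ ⟨hτ, hp⟩
    have hcs : ∀ j, IsCompact (τ j • Δ j) := fun j => (hc j).smul _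
    have hns : ∀ j, (τ j • Δ j).Nonempty := fun j => (hne j).smul_set
    have h1 : minPair (∑ j, τ j • Δ j) y.1 ≤ pairing p y.1 :=
      minPair_le (isCompact_nonempty_finsetSum _ Finset.univ hcs hns).1 hp y.1
    have h2 : minPair (∑ j, τ j • Δ j) y.1 = ∑ j, τ j * minPair (Δ j) y.1 := by
      rw [minPair_finsetSum _ Finset.univ hcs hns]
      exact Finset.sum_congr rfl fun j _ => minPair_smul_set (hc j) (hne j) (hτ j) y.1
    have h3 : 0 ≤ ∑ j, τ j * (minPair (Δ j) y.1 + y.2 j) :=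
      Finset.sum_nonneg fun j _ => mul_nonneg (hτ j) (h j)
    rw [h2] at h1
    simp only [mul_add, Finset.sum_add_distrib] at h3
    show 0 ≤ pairing p y.1 + ∑ j, τ j * y.2 j
    linarith

set_option maxHeartbeats 1000000

/-- under `cayleyIso`, the image of the dual of the Cayley cone equals
`{(t·Conv({u − Σᵢ₌₁ᵏ min⟨Δᵢ,u⟩eᵢ* : u ∈ Δ*} ∪ {e₁*, …, e_k*}), t) : t ≥ 0}`. -/
theorem image_dual_cayleyCone {d k : ℕ}
    (Δ : Fin (k+1) → Set (Fin d → ℝ))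
    (hlat : ∀ i, IsLatticePolytope (Δ i))
    (hrefl : IsReflexive (∑ i, Δ i))
    (Q : Set (Vdk d k))
    (hQ : Q = convexHull ℝ
        ((fun u => ((u, fun i : Fin k => -(minPair (Δ i.succ) u)) : Vdk d k)) ''
            polarDual (∑ i, Δ i) ∪
          ⋃ i : Fin k, {(((0 : Fin d → ℝ), Pi.single i 1) : Vdk d k)})) :
    cayleyIso '' dualConeV (cayleyCone Δ) =
      {q : (Fin d → ℝ) × (Fin k → ℝ) × ℝ | 0 ≤ q.2.2 ∧ (q.1, q.2.1) ∈ q.2.2 • Q} := by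
  classical
  have hc : ∀ i, IsCompact (Δ i) := fun i => by
    obtain ⟨S, hS, -, h⟩ := hlat i
    rw [h]; exact hS.isCompact_convexHull (𝕜 := ℝ)
  have h0mem : (0 : Fin d → ℝ) ∈ ∑ i, Δ i := interior_subset hrefl.2.1
  have hne : ∀ i, (Δ i).Nonempty := by
    intro i
    rw [Set.mem_fintype_sum] at h0mem
    obtain ⟨g, hg, -⟩ := h0mem
    exact ⟨g i, hg i⟩
  have h0mem : (0 : Fin d → ℝ) ∈ ∑ i, Δ i := interior_subset hrefl.2.1
  have hcS : IsCompact (∑ i, Δ i) := (isCompact_nonempty_finsetSum Δ Finset.univ hc hne).1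
  have hMsum : ∀ u, minPair (∑ i, Δ i) u = ∑ i, minPair (Δ i) u :=
    fun u => minPair_finsetSum Δ Finset.univ hc hne u
  have hM0 : ∀ u, minPair (∑ i, Δ i) u ≤ 0 := fun u => by
    have := minPair_le hcS h0mem u
    rwa [pairing_zero_left] at this
  have hMneg : ∀ u : Fin d → ℝ, 0 ≤ minPair (∑ i, Δ i) u → u = 0 := by
    intro u hu
    by_contra h
    exact absurd hu (not_le.mpr (minPair_neg_of_interior hcS hrefl.2.1 h))
  have hmz : ∀ i, minPair (Δ i) (0 : Fin d → ℝ) = 0 := fun i =>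
    minPair_zero_right (hc i) (hne i)
  -- `Q` is contained in the "slice" set `A`
  have hQA : Q ⊆ {p : Vdk d k | (∀ i, 0 ≤ p.2 i + minPair (Δ i.succ) p.1) ∧
      ∑ i, p.2 i ≤ 1 + minPair (Δ 0) p.1} := by
    rw [hQ]
    apply convexHull_min
    · rintro p (⟨u, hu, rfl⟩ | hp)
      · constructor
        · intro i
          show (0:ℝ) ≤ -(minPair (Δ i.succ) u) + minPair (Δ i.succ) u
          linarith
        · have h1 : -1 ≤ minPair (∑ i, Δ i) u := le_minPair ⟨0, h0mem⟩ hu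
          rw [hMsum, Fin.sum_univ_succ] at h1
          show ∑ i : Fin k, -(minPair (Δ i.succ) u) ≤ 1 + minPair (Δ 0) u
          rw [Finset.sum_neg_distrib]
          linarith
      · simp only [Set.mem_iUnion, Set.mem_singleton_iff] at hp
        obtain ⟨i, rfl⟩ := hp
        constructor
        · intro j
          show (0:ℝ) ≤ (Pi.single i 1 : Fin k → ℝ) j + minPair (Δ j.succ) (0 : Fin d → ℝ)
          rw [hmz]
          rcases eq_or_ne j i with rfl | hji
          · simp
          · simp [Pi.single_eq_of_ne hji]
        · show ∑ j : Fin k, (Pi.single i 1 : Fin k → ℝ) j ≤ 1 + minPair (Δ 0) (0 : Fin d → ℝ)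
          rw [hmz]
          have hone : ∑ j : Fin k, (Pi.single i 1 : Fin k → ℝ) j = 1 := by
            simp [Pi.single_apply]
          rw [hone]; norm_num
    · rintro p hp q hq a b ha hb hab
      constructor
      · intro i
        have hcombo := minPair_combo (hc i.succ) (hne i.succ) ha hb p.1 q.1
        have t1 := mul_nonneg ha (hp.1 i)
        have t2 := mul_nonneg hb (hq.1 i)
        simp only [Prod.fst_add, Prod.snd_add, Prod.smul_fst, Prod.smul_snd,
          Pi.add_apply, Pi.smul_apply, smul_eq_mul]
        nlinarith [hcombo, t1, t2]
      · have hcombo := minPair_combo (hc 0) (hne 0) ha hb p.1 q.1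
        have t1 := mul_le_mul_of_nonneg_left hp.2 ha
        have t2 := mul_le_mul_of_nonneg_left hq.2 hb
        simp only [Prod.fst_add, Prod.snd_add, Prod.smul_fst, Prod.smul_snd,
          Pi.add_apply, Pi.smul_apply, smul_eq_mul, Finset.sum_add_distrib,
          ← Finset.mul_sum]
        nlinarith [hcombo, t1, t2]
  -- membership criterion for `Q`
  have hAQ : ∀ (v : Fin d → ℝ) (β : Fin k → ℝ),
      (∀ i, 0 ≤ β i + minPair (Δ i.succ) v) → (∑ i, β i ≤ 1 + minPair (Δ 0) v) →
      ((v, β) : Vdk d k) ∈ Q := by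
    intro v β hβ hβs
    set γ : Fin k → ℝ := fun i => β i + minPair (Δ i.succ) v with hγ
    set s : ℝ := 1 - ∑ i, γ i with hs
    have hMv : minPair (∑ i, Δ i) v = minPair (Δ 0) v + ∑ i : Fin k, minPair (Δ i.succ) v := by
      rw [hMsum, Fin.sum_univ_succ]
    have hγsum : ∑ i, γ i = ∑ i, β i + ∑ i : Fin k, minPair (Δ i.succ) v := by
      rw [hγ]; exact Finset.sum_add_distrib
    have hsnn : 0 ≤ s := by
      have hh := hM0 v; rw [hMv] at hh
      rw [hs, hγsum]; linarith
    have hMls : -s ≤ minPair (∑ i, Δ i) v := by rw [hMv, hs, hγsum]; linarith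
    set w : Fin d → ℝ := s⁻¹ • v with hw
    have hsw : s • w = v := by
      rcases eq_or_lt_of_le hsnn with h0 | hpos
      · have hv0 : v = 0 := by
          apply hMneg v
          rw [← h0] at hMls
          simpa using hMls
        rw [hw, hv0, ← h0]; simp
      · rw [hw, smul_smul, mul_inv_cancel₀ hpos.ne', one_smul]
    have hwD : w ∈ polarDual (∑ i, Δ i) := by
      have hle : -1 ≤ minPair (∑ i, Δ i) w := by
        rcases eq_or_lt_of_le hsnn with h0 | hpos
        · have hw0 : w = 0 := by rw [hw, ← h0]; simp
          rw [hw0, minPair_zero_right hcS ⟨0, h0mem⟩]; norm_num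
        · have heq : minPair (∑ i, Δ i) v = s * minPair (∑ i, Δ i) w := by
            rw [← hsw, minPair_smul_right hcS ⟨0, h0mem⟩ hsnn]
          rw [heq] at hMls
          nlinarith [hMls, hpos]
      intro x hx
      exact hle.trans (minPair_le hcS hx w)
    have hsmw : ∀ i : Fin k, s * minPair (Δ i.succ) w = minPair (Δ i.succ) v := by
      intro i
      rw [← hsw, minPair_smul_right (hc i.succ) (hne i.succ) hsnn]
    rw [hQ]
    set Z : Fin (k+1) → Vdk d k :=
      Fin.cons ((w, fun i => -(minPair (Δ i.succ) w)) : Vdk d k)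
        (fun i => ((0, Pi.single i 1) : Vdk d k)) with hZ
    set W : Fin (k+1) → ℝ := Fin.cons s γ with hW
    have hsingle : ∑ i : Fin k, γ i • (Pi.single i 1 : Fin k → ℝ) = γ := by
      have hps : ∀ i : Fin k, γ i • (Pi.single i 1 : Fin k → ℝ) = Pi.single i (γ i) := by
        intro i; funext j
        simp [Pi.single_apply, mul_ite]
      simp_rw [hps]
      exact Finset.univ_sum_single γ
    have hS1 : (∑ i : Fin k,
        γ i • (((0 : Fin d → ℝ), (Pi.single i 1 : Fin k → ℝ)) : Vdk d k)) =
        (((0 : Fin d → ℝ), γ) : Vdk d k) := by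
      refine Prod.ext ?_ ?_
      · rw [Prod.fst_sum]; simp
      · rw [Prod.snd_sum]
        simp only [Prod.smul_snd]
        exact hsingle
    have hzsum : ∑ j, W j • Z j = ((v, β) : Vdk d k) := by
      calc ∑ j, W j • Z j
          = s • ((w, fun i => -(minPair (Δ i.succ) w)) : Vdk d k)
            + ∑ i : Fin k, γ i • (((0 : Fin d → ℝ), (Pi.single i 1 : Fin k → ℝ)) : Vdk d k) := by
            rw [hW, hZ, Fin.sum_univ_succ]
            simp only [Fin.cons_zero, Fin.cons_succ]
        _ = ((v, β) : Vdk d k) := by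
            rw [hS1, Prod.smul_mk, Prod.mk_add_mk]
            refine Prod.ext ?_ ?_
            · simpa using hsw
            · funext j
              simp only [Pi.add_apply, Pi.smul_apply, smul_eq_mul]
              have hj := hsmw j
              have hγj : γ j = β j + minPair (Δ j.succ) v := rfl
              show s * -(minPair (Δ j.succ) w) + γ j = β j
              rw [hγj]
              linarith
    rw [← hzsum]
    apply (convex_convexHull ℝ _).sum_mem
    · intro j _
      refine Fin.cases ?_ ?_ j
      · rw [hW]; simpa using hsnn
      · intro i
        rw [hW]
        simpa using hβ i
    · rw [hW, Fin.sum_univ_succ]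
      simp only [Fin.cons_zero, Fin.cons_succ]
      rw [hs]; ring
    · intro j _
      refine Fin.cases ?_ ?_ j
      · rw [hZ]
        simp only [Fin.cons_zero]
        exact subset_convexHull ℝ _ (Or.inl ⟨w, hwD, rfl⟩)
      · intro i
        rw [hZ]
        simp only [Fin.cons_succ]
        exact subset_convexHull ℝ _ (Or.inr (Set.mem_iUnion.mpr ⟨i, rfl⟩))
  -- now the main equality
  ext ⟨v, β, t⟩
  simp only [Set.mem_image, Set.mem_setOf_eq]
  constructor
  · rintro ⟨⟨u, α⟩, hy, heq⟩
    simp only [cayleyIso, Prod.mk.injEq] at heq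
    obtain ⟨rfl, rfl, rfl⟩ := heq
    have hα : ∀ i, 0 ≤ minPair (Δ i) u + α i :=
      (mem_dualConeV_cayley_iff Δ hc hne (u, α)).mp hy
    have hMu : ∑ i, minPair (Δ i) u ≤ 0 := by
      have := hM0 u; rwa [hMsum u] at this
    have ht : 0 ≤ ∑ i, α i := by
      have h1 : 0 ≤ ∑ i, (minPair (Δ i) u + α i) := Finset.sum_nonneg fun i _ => hα i
      rw [Finset.sum_add_distrib] at h1
      linarith
    refine ⟨ht, ?_⟩
    rcases eq_or_lt_of_le ht with h0 | hpos
    · have h1 : 0 ≤ ∑ i, (minPair (Δ i) u + α i) := Finset.sum_nonneg fun i _ => hα i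
      rw [Finset.sum_add_distrib, ← h0, add_zero] at h1
      have hu0 : u = 0 := hMneg u (by rw [hMsum]; exact h1)
      have hα0 : ∀ i, α i = 0 := by
        have hnn : ∀ i ∈ Finset.univ, (0:ℝ) ≤ α i := fun i _ => by
          have := hα i; rw [hu0, hmz] at this; linarith
        intro i
        exact (Finset.sum_eq_zero_iff_of_nonneg hnn).mp h0.symm i (Finset.mem_univ i)
      have hpt : ((u, fun i => α i.succ) : Vdk d k) = 0 := by
        rw [hu0]
        have : (fun i : Fin k => α i.succ) = (0 : Fin k → ℝ) := funext fun i => hα0 i.succ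
        rw [this]
        simp [Prod.mk_zero_zero]
      rw [hpt, ← h0]
      have hf0Q : ((0, fun i => -(minPair (Δ i.succ) (0 : Fin d → ℝ))) : Vdk d k) ∈ Q := by
        rw [hQ]
        refine subset_convexHull ℝ _ (Or.inl ⟨0, ?_, rfl⟩)
        intro x hx
        rw [pairing_zero_right]; norm_num
      exact Set.mem_smul_set.mpr ⟨_, hf0Q, by simp⟩
    · set t := ∑ i, α i with htdef
      have htinv : (0:ℝ) ≤ t⁻¹ := inv_nonneg.mpr ht
      refine Set.mem_smul_set.mpr ⟨(t⁻¹ • u, t⁻¹ • fun i => α i.succ), ?_, ?_⟩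
      · apply hAQ
        · intro i
          rw [minPair_smul_right (hc i.succ) (hne i.succ) htinv u]
          have h2 := mul_nonneg htinv (hα i.succ)
          simp only [Pi.smul_apply, smul_eq_mul]
          nlinarith [h2]
        · rw [minPair_smul_right (hc 0) (hne 0) htinv u]
          simp only [Pi.smul_apply, smul_eq_mul, ← Finset.mul_sum]
          have hsum : ∑ i : Fin k, α i.succ = t - α 0 := by
            rw [htdef, Fin.sum_univ_succ]; ring
          rw [hsum]
          have h2 := mul_nonneg htinv (hα 0)
          have h3 : t⁻¹ * t = 1 := inv_mul_cancel₀ hpos.ne'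
          nlinarith [h2, h3]
      · rw [Prod.smul_mk, smul_smul, mul_inv_cancel₀ hpos.ne', one_smul, smul_smul,
          mul_inv_cancel₀ hpos.ne', one_smul]
  · rintro ⟨ht, hmem⟩
    obtain ⟨p, hpQ, hpe⟩ := hmem
    obtain ⟨hp1, hp2⟩ := hQA hpQ
    have h1 : t • p.1 = v := congrArg Prod.fst hpe
    have h2 : t • p.2 = β := congrArg Prod.snd hpe
    refine ⟨(v, Fin.cons (t - ∑ i, β i) β), ?_, ?_⟩
    · rw [mem_dualConeV_cayley_iff Δ hc hne]
      intro i
      refine Fin.cases ?_ (fun j => ?_) i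
      · simp only [Fin.cons_zero]
        rw [← h1, minPair_smul_right (hc 0) (hne 0) ht]
        have hsum : ∑ i, β i = t * ∑ i, p.2 i := by
          rw [← h2]; simp [Finset.mul_sum]
        rw [hsum]
        nlinarith [mul_le_mul_of_nonneg_left hp2 ht]
      · simp only [Fin.cons_succ]
        rw [← h1, ← h2, minPair_smul_right (hc j.succ) (hne j.succ) ht]
        have h3 := mul_nonneg ht (hp1 j)
        simp only [Pi.smul_apply, smul_eq_mul]
        nlinarith [h3]
    · have hsum : ∑ j, (Fin.cons (t - ∑ i, β i) β : Fin (k+1) → ℝ) j = t := by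
        rw [Fin.sum_univ_succ, Fin.cons_zero]
        simp only [Fin.cons_succ]
        ring
      simp only [cayleyIso, Fin.cons_succ, hsum]
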